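/- Let R be a separate ranking function space, i.e., for every x ∈ X there exists r_x ∈ R with r_x(x) < r_x(x') for all x' ∈ X ∖ {x}. If the binary class φ∘R = {(x,x') ↦ 1_{r(x)>r(x')} : r ∈ R} on X × X has finite VC dimension d, and |X| ≥ (28d+14)·log(14d+7) (natural logarithm), then OOD detection is not learnable under AUC in the separate space 𝒟^s for R. -/

import Mathlib

open MeasureTheory Filter Set
open scoped ENNReal NNReal

noncomputable section

namespace OODF

/-- A *domain*: a mixture `(1-π)·D_I + π·D_O` of an ID joint distribution `D_I` on
`𝒳 × {1,…,K}` and an OOD joint distribution `D_O` on `𝒳 × {K+1}`, with class prior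
`π ∈ [0,1)`.  Labels are encoded as naturals: ID labels are `{1,…,K}`, OOD label is `K+1`. -/
structure Domain (𝒳 : Type*) [MeasurableSpace 𝒳] (K : ℕ) where
  DI : Measure (𝒳 × ℕ)
  DO : Measure (𝒳 × ℕ)
  prior : ℝ
  probI : IsProbabilityMeasure DI
  probO : IsProbabilityMeasure DO
  suppI : DI {p | p.2 ∉ Set.Icc 1 K} = 0
  suppO : DO {p | p.2 ≠ K + 1} = 0
  prior_mem : prior ∈ Set.Ico (0 : ℝ) 1

variable {𝒳 : Type*} [MeasurableSpace 𝒳] {K : ℕ}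

namespace Domain

/-- the mixed joint distribution `D_XY = (1-π)·D_I + π·D_O` -/
def joint (D : Domain 𝒳 K) : Measure (𝒳 × ℕ) :=
  ENNReal.ofReal (1 - D.prior) • D.DI + ENNReal.ofReal D.prior • D.DO

/-- the marginal `D_{X_I}` of the ID joint distribution on the feature space -/
def margI (D : Domain 𝒳 K) : Measure 𝒳 := D.DI.map Prod.fst

/-- the marginal `D_{X_O}` of the OOD joint distribution on the feature space -/
def margO (D : Domain 𝒳 K) : Measure 𝒳 := D.DO.map Prod.fst

/-- the domain `D^α = (1-α)·D_I + α·D_O`, i.e. `D` with its class prior replaced by `α` -/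
def withPrior (D : Domain 𝒳 K) (α : Set.Ico (0 : ℝ) 1) : Domain 𝒳 K :=
  { D with prior := α.1, prior_mem := α.2 }

end Domain

/-- a prior-unknown domain space: closed under changing the class prior -/
def PriorUnknown (𝒟 : Set (Domain 𝒳 K)) : Prop :=
  ∀ D ∈ 𝒟, ∀ α : Set.Ico (0 : ℝ) 1, D.withPrior α ∈ 𝒟

/-- the risk `R_D(h)` w.r.t. the mixed joint distribution -/
def risk (ℓ : ℕ → ℕ → ℝ) (D : Domain 𝒳 K) (h : 𝒳 → ℕ) : ℝ :=
  ∫ p, ℓ (h p.1) p.2 ∂D.joint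

/-- the ID risk `R_D^in(h)` -/
def riskIn (ℓ : ℕ → ℕ → ℝ) (D : Domain 𝒳 K) (h : 𝒳 → ℕ) : ℝ :=
  ∫ p, ℓ (h p.1) p.2 ∂D.DI

/-- the OOD risk `R_D^out(h)` -/
def riskOut (ℓ : ℕ → ℕ → ℝ) (D : Domain 𝒳 K) (h : 𝒳 → ℕ) : ℝ :=
  ∫ p, ℓ (h p.1) (K + 1) ∂D.DO

/-- the `α`-risk `R_D^α(h) = (1-α)·R_D^in(h) + α·R_D^out(h)` -/
def riskA (ℓ : ℕ → ℕ → ℝ) (D : Domain 𝒳 K) (h : 𝒳 → ℕ) (α : ℝ) : ℝ :=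
  (1 - α) * riskIn ℓ D h + α * riskOut ℓ D h

/-- the distribution of an i.i.d. sample of size `n` from the ID joint distribution -/
def sampleMeasure (D : Domain 𝒳 K) (n : ℕ) : Measure (Fin n → 𝒳 × ℕ) :=
  letI := D.probI
  Measure.pi fun _ => D.DI

/-- An algorithm maps, for every sample size `n ≥ 1`, a labeled sample to a function on `𝒳`. -/
abbrev Algorithm (𝒳 β : Type*) := (n : ℕ) → (Fin n → 𝒳 × ℕ) → (𝒳 → β)

/-- `A` is consistent w.r.t. `𝒟` under risk with rate `ε`: it outputs hypotheses in `H`,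
the resulting risks are measurable in the sample, and the expected excess risk for samples
of size `n ≥ 1` is at most `ε n`. -/
def ConsistentRisk (ℓ : ℕ → ℕ → ℝ) (𝒟 : Set (Domain 𝒳 K)) (H : Set (𝒳 → ℕ))
    (A : Algorithm 𝒳 ℕ) (ε : ℕ → ℝ) : Prop :=
  (∀ n : ℕ, 1 ≤ n → ∀ S, A n S ∈ H) ∧
  (∀ D ∈ 𝒟, ∀ n : ℕ, 1 ≤ n → Measurable fun S : Fin n → 𝒳 × ℕ => risk ℓ D (A n S)) ∧
  ∀ D ∈ 𝒟, ∀ n : ℕ, 1 ≤ n →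
    ∫ S, (risk ℓ D (A n S) - ⨅ h : H, risk ℓ D h.1) ∂(sampleMeasure D n) ≤ ε n

/-- OOD detection is learnable under risk in `𝒟` for `H` with the given rate. -/
def LearnableRiskRate (ℓ : ℕ → ℕ → ℝ) (𝒟 : Set (Domain 𝒳 K)) (H : Set (𝒳 → ℕ))
    (ε : ℕ → ℝ) : Prop :=
  ∃ A, ConsistentRisk ℓ 𝒟 H A ε

/-- learnability of OOD detection under risk -/
def LearnableRisk (ℓ : ℕ → ℕ → ℝ) (𝒟 : Set (Domain 𝒳 K)) (H : Set (𝒳 → ℕ)) : Prop :=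
  ∃ ε : ℕ → ℝ, Antitone ε ∧ Tendsto ε atTop (nhds 0) ∧ LearnableRiskRate ℓ 𝒟 H ε

/-- `A` is strongly consistent: the expected excess `α`-risks are uniformly small over
all `α ∈ [0,1]`. -/
def StrongConsistentRisk (ℓ : ℕ → ℕ → ℝ) (𝒟 : Set (Domain 𝒳 K)) (H : Set (𝒳 → ℕ))
    (A : Algorithm 𝒳 ℕ) (ε : ℕ → ℝ) : Prop :=
  (∀ n : ℕ, 1 ≤ n → ∀ S, A n S ∈ H) ∧
  (∀ D ∈ 𝒟, ∀ n : ℕ, 1 ≤ n → ∀ α : ℝ,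
    Measurable fun S : Fin n → 𝒳 × ℕ => riskA ℓ D (A n S) α) ∧
  ∀ D ∈ 𝒟, ∀ n : ℕ, 1 ≤ n → ∀ α ∈ Set.Icc (0 : ℝ) 1,
    ∫ S, (riskA ℓ D (A n S) α - ⨅ h : H, riskA ℓ D h.1 α) ∂(sampleMeasure D n) ≤ ε n

/-- strong learnability of OOD detection under risk -/
def StrongLearnableRisk (ℓ : ℕ → ℕ → ℝ) (𝒟 : Set (Domain 𝒳 K)) (H : Set (𝒳 → ℕ)) : Prop :=
  ∃ ε : ℕ → ℝ, Antitone ε ∧ Tendsto ε atTop (nhds 0) ∧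
    ∃ A, StrongConsistentRisk ℓ 𝒟 H A ε

/-- the AUC of a ranking function `r` w.r.t. ID marginal `P` and OOD marginal `Q`:
`AUC(r) = E_{x ~ P} E_{x' ~ Q} [1_{r(x) > r(x')} + (1/2)·1_{r(x) = r(x')}]` -/
def AUC (r : 𝒳 → ℝ) (P Q : Measure 𝒳) : ℝ :=
  ∫ x, (∫ x', ((if r x' < r x then (1 : ℝ) else 0) +
      (1 / 2) * (if r x = r x' then (1 : ℝ) else 0)) ∂Q) ∂P

/-- `A` is AUC-consistent w.r.t. `𝒟` with rate `ε`. -/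
def ConsistentAUC (𝒟 : Set (Domain 𝒳 K)) (R : Set (𝒳 → ℝ))
    (A : Algorithm 𝒳 ℝ) (ε : ℕ → ℝ) : Prop :=
  (∀ n : ℕ, 1 ≤ n → ∀ S, A n S ∈ R) ∧
  (∀ D ∈ 𝒟, ∀ n : ℕ, 1 ≤ n →
    Measurable fun S : Fin n → 𝒳 × ℕ => AUC (A n S) D.margI D.margO) ∧
  ∀ D ∈ 𝒟, ∀ n : ℕ, 1 ≤ n →
    ∫ S, ((⨆ r : R, AUC r.1 D.margI D.margO) - AUC (A n S) D.margI D.margO)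
      ∂(sampleMeasure D n) ≤ ε n

/-- OOD detection is learnable under AUC in `𝒟` for `R` with the given rate. -/
def LearnableAUCRate (𝒟 : Set (Domain 𝒳 K)) (R : Set (𝒳 → ℝ)) (ε : ℕ → ℝ) : Prop :=
  ∃ A, ConsistentAUC 𝒟 R A ε

/-- learnability of OOD detection under AUC -/
def LearnableAUC (𝒟 : Set (Domain 𝒳 K)) (R : Set (𝒳 → ℝ)) : Prop :=
  ∃ ε : ℕ → ℝ, Antitone ε ∧ Tendsto ε atTop (nhds 0) ∧ LearnableAUCRate 𝒟 R ε

/-- the (topological) support of a measure -/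
def mSupport {α : Type*} [TopologicalSpace α] [MeasurableSpace α] (μ : Measure α) : Set α :=
  {x | ∀ U ∈ nhds x, 0 < μ U}

/-- the separate space `𝒟^s`: all domains whose ID and OOD marginals have disjoint supports -/
def separateSpace (𝒳 : Type*) [MeasurableSpace 𝒳] [TopologicalSpace 𝒳] (K : ℕ) :
    Set (Domain 𝒳 K) :=
  {D | mSupport D.margO ∩ mSupport D.margI = ∅}

/-- a class `G` of binary functions (encoded as predicates) shatters the finite set `C` -/
def Shatters {α : Type*} (G : Set (α → Prop)) (C : Finset α) : Prop :=
  ∀ f : α → Prop, ∃ g ∈ G, ∀ x ∈ C, g x ↔ f x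

/-- the VC dimension of a class of binary functions (encoded as predicates) -/
def VCdim {α : Type*} (G : Set (α → Prop)) : ℕ∞ :=
  sSup {n : ℕ∞ | ∃ C : Finset α, Shatters G C ∧ n = (C.card : ℕ∞)}


section Aux

variable {E : Type*} [MeasurableSpace E]

lemma integrable_dirac'' [MeasurableSingletonClass E] (f : E → ℝ) (a : E) :
    Integrable f (Measure.dirac a) :=
  (integrable_const (f a)).congr (ae_eq_dirac f).symm

lemma isProb_unif {k : ℕ} (hk : k ≠ 0) (p : Fin k → E) :
    IsProbabilityMeasure ((k : ℝ≥0∞)⁻¹ • ∑ j, Measure.dirac (p j)) := by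
  constructor
  rw [Measure.smul_apply, Measure.coe_finset_sum]
  simp only [Finset.sum_apply, measure_univ, Finset.sum_const, Finset.card_univ,
    Fintype.card_fin, nsmul_eq_mul, mul_one, smul_eq_mul]
  exact ENNReal.inv_mul_cancel (by exact_mod_cast hk) (by simp)

lemma map_fst_sum_dirac {β : Type*} [MeasurableSpace β] {k : ℕ} (p : Fin k → E × β) :
    Measure.map Prod.fst (∑ j, Measure.dirac (p j)) = ∑ j, Measure.dirac (p j).1 := by
  ext s hs
  rw [Measure.map_apply measurable_fst hs, Measure.coe_finset_sum, Measure.coe_finset_sum]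
  simp only [Finset.sum_apply]
  refine Finset.sum_congr rfl fun j _ => ?_
  rw [Measure.dirac_apply' _ (measurable_fst hs), Measure.dirac_apply' _ hs]
  rfl

lemma AUC_unif_dirac [MeasurableSingletonClass E] {k : ℕ} (a : Fin k → E) (b : E) (r : E → ℝ) :
    AUC r ((k : ℝ≥0∞)⁻¹ • ∑ j, Measure.dirac (a j)) (Measure.dirac b)
    = (k : ℝ)⁻¹ * ∑ j, ((if r b < r (a j) then (1 : ℝ) else 0)
        + (1 / 2) * (if r (a j) = r b then 1 else 0)) := by
  unfold AUC
  simp only [integral_dirac]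
  rw [integral_smul_measure, integral_finset_sum_measure (fun j _ => integrable_dirac'' _ _)]
  simp only [integral_dirac, smul_eq_mul, ENNReal.toReal_inv, ENNReal.toReal_natCast]

lemma mSupport_subset [TopologicalSpace E] {μ : Measure E} {F : Set E}
    (hF : IsClosed F) (h : μ Fᶜ = 0) : mSupport μ ⊆ F := by
  intro x hx
  by_contra hxF
  have hU : Fᶜ ∈ nhds x := hF.isOpen_compl.mem_nhds hxF
  have := hx _ hU
  rw [h] at this
  exact lt_irrefl 0 this

lemma term_nonneg (u v : ℝ) :
    0 ≤ (if v < u then (1 : ℝ) else 0) + 1 / 2 * (if u = v then 1 else 0) := by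
  split_ifs <;> norm_num

lemma term_le_one (u v : ℝ) :
    (if v < u then (1 : ℝ) else 0) + 1 / 2 * (if u = v then 1 else 0) ≤ 1 := by
  split_ifs with h1 h2 <;> first | linarith [h2 ▸ h1] | norm_num

lemma exists_bad_pairs {α : Type*} {dvc : ℕ} (G : Set (α × α → Prop))
    (hVC : VCdim G = (dvc : ℕ∞)) (z : Fin (2 * (dvc + 1)) → α)
    (hz : Function.Injective z) :
    ∃ Ap Bp : Fin (dvc + 1) → α, Function.Injective Ap ∧ (∀ i j, Bp i ≠ Ap j) ∧
      ∀ g ∈ G, ∃ i, ¬ g (Ap i, Bp i) ∨ g (Bp i, Ap i) := by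
  classical
  obtain ⟨a, ha⟩ : ∃ a : Fin (dvc + 1) → α, ∀ i, a i = z ⟨2 * i, by have := i.isLt; omega⟩ :=
    ⟨_, fun _ => rfl⟩
  obtain ⟨b, hb⟩ : ∃ b : Fin (dvc + 1) → α, ∀ i, b i = z ⟨2 * i + 1, by have := i.isLt; omega⟩ :=
    ⟨_, fun _ => rfl⟩
  have hidx : ∀ (n m : Fin (2 * (dvc + 1))), z n = z m → n.val = m.val :=
    fun n m h => by rw [hz h]
  have haa : ∀ i j : Fin (dvc + 1), a i = a j → i = j := by
    intro i j h
    rw [ha, ha] at h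
    have := hidx _ _ h
    simp only at this
    exact Fin.ext (by omega)
  have hbb : ∀ i j : Fin (dvc + 1), b i = b j → i = j := by
    intro i j h
    rw [hb, hb] at h
    have := hidx _ _ h
    simp only at this
    exact Fin.ext (by omega)
  have hab : ∀ i j : Fin (dvc + 1), a i ≠ b j := by
    intro i j h
    rw [ha, hb] at h
    have := hidx _ _ h
    simp only at this
    omega
  set C : Finset (α × α) := Finset.image (fun i => (a i, b i)) Finset.univ with hC
  have hCcard : C.card = dvc + 1 := by
    rw [hC, Finset.card_image_of_injective _ (fun i j h => haa i j (congrArg Prod.fst h))]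
    simp
  have hnot : ¬ Shatters G C := by
    intro hs
    have hmem : ((C.card : ℕ∞)) ∈
        {n : ℕ∞ | ∃ C' : Finset (α × α), Shatters G C' ∧ n = (C'.card : ℕ∞)} := ⟨C, hs, rfl⟩
    have hle := le_sSup hmem
    rw [show sSup {n : ℕ∞ | ∃ C' : Finset (α × α), Shatters G C' ∧ n = (C'.card : ℕ∞)}
        = VCdim G from rfl, hVC, hCcard] at hle
    have : dvc + 1 ≤ dvc := by exact_mod_cast hle
    omega
  rw [Shatters] at hnot
  push_neg at hnot
  obtain ⟨f, hf⟩ := hnot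
  obtain ⟨Ap, hAp⟩ : ∃ Ap : Fin (dvc + 1) → α,
      ∀ i, Ap i = if f (a i, b i) then a i else b i := ⟨_, fun _ => rfl⟩
  obtain ⟨Bp, hBp⟩ : ∃ Bp : Fin (dvc + 1) → α,
      ∀ i, Bp i = if f (a i, b i) then b i else a i := ⟨_, fun _ => rfl⟩
  refine ⟨Ap, Bp, ?_, ?_, ?_⟩
  · intro i j h
    rw [hAp, hAp] at h
    by_cases h1 : f (a i, b i) <;> by_cases h2 : f (a j, b j) <;>
      simp only [h1, h2, if_true, if_false] at h
    · exact haa i j h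
    · exact absurd h (hab i j)
    · exact absurd h.symm (hab j i)
    · exact hbb i j h
  · intro i j h
    rw [hBp, hAp] at h
    by_cases h1 : f (a i, b i) <;> by_cases h2 : f (a j, b j) <;>
      simp only [h1, h2, if_true, if_false] at h
    · exact absurd h.symm (hab j i)
    · obtain rfl := hbb i j h; exact h2 h1
    · obtain rfl := haa i j h; exact h1 h2
    · exact hab i j h
  · intro g hg
    obtain ⟨p, hpC, hp⟩ := hf g hg
    rw [hC] at hpC
    simp only [Finset.mem_image, Finset.mem_univ, true_and] at hpC
    obtain ⟨i, rfl⟩ := hpC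
    refine ⟨i, ?_⟩
    by_cases hfi : f (a i, b i)
    · left
      rw [hAp, hBp]
      simp only [hfi, if_true]
      rcases hp with ⟨-, hnf⟩ | ⟨hng, -⟩
      · exact absurd hfi hnf
      · exact hng
    · right
      rw [hAp, hBp]
      simp only [hfi, if_false]
      rcases hp with ⟨hg', -⟩ | ⟨-, hf'⟩
      · exact hg'
      · exact absurd hf' hfi

lemma sampleMeasure_eq {𝒳 : Type*} [MeasurableSpace 𝒳] {K : ℕ} (D : Domain 𝒳 K) (n : ℕ) :
    sampleMeasure D n = Measure.pi (fun _ : Fin n => D.DI) := rfl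

end Aux

set_option maxHeartbeats 1600000 in
/-- Theorem 8 / `T12_auc` of the paper: impossibility for the separate
space under AUC.  Let `R` be a separate ranking function space.  If the binary class
`φ∘R = {(x,x') ↦ 1_{r(x) > r(x')} : r ∈ R}` has finite VC dimension `dvc` and
`|X| ≥ (28·dvc + 14)·log(14·dvc + 7)`, then OOD detection is not learnable under AUC in
the separate space `𝒟^s` for `R`. -/
theorem stmt10 {d K : ℕ} (hK : 1 ≤ K) (X : Set (EuclideanSpace ℝ (Fin d)))
    (R : Set (↥X → ℝ)) (hR : ∀ r ∈ R, Measurable r)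
    (hsepR : ∀ x : ↥X, ∃ r ∈ R, ∀ x' : ↥X, x' ≠ x → r x < r x')
    (dvc : ℕ)
    (hVC : VCdim {g : ↥X × ↥X → Prop | ∃ r ∈ R, g = fun p => r p.2 < r p.1} = (dvc : ℕ∞))
    (hcard : ((⌈(28 * (dvc : ℝ) + 14) * Real.log (14 * (dvc : ℝ) + 7)⌉₊ : ℕ∞))
        ≤ (Set.univ : Set ↥X).encard) :
    ¬ LearnableAUC (separateSpace ↥X K) R := by
  classical
  intro hL
  obtain ⟨ε, hεanti, hε0, A, hAmem, hAmeas, hAbound⟩ := hL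
  -- `X` has at least `2 * (dvc + 1)` points
  have hlog : (1 : ℝ) ≤ Real.log (14 * (dvc : ℝ) + 7) := by
    rw [Real.le_log_iff_exp_le (by positivity)]
    have h3 : Real.exp 1 < 2.7182818286 := Real.exp_one_lt_d9
    nlinarith [Nat.cast_nonneg (α := ℝ) dvc]
  have hcard2 : ((2 * (dvc + 1) : ℕ) : ℕ∞) ≤ (Set.univ : Set ↥X).encard := by
    refine le_trans ?_ hcard
    rw [Nat.cast_le]
    have h2 : ((2 * (dvc + 1) : ℕ) : ℝ)
        ≤ (28 * (dvc : ℝ) + 14) * Real.log (14 * (dvc : ℝ) + 7) := by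
      push_cast
      nlinarith [Nat.cast_nonneg (α := ℝ) dvc]
    have h4 : ((2 * (dvc + 1) : ℕ) : ℝ)
        ≤ ((⌈(28 * (dvc : ℝ) + 14) * Real.log (14 * (dvc : ℝ) + 7)⌉₊ : ℕ) : ℝ) :=
      h2.trans (Nat.le_ceil _)
    exact_mod_cast h4
  obtain ⟨t, -, ht⟩ := Set.exists_subset_encard_eq hcard2
  have htfin : t.Finite := Set.finite_of_encard_eq_coe ht
  haveI : Fintype t := htfin.fintype
  have htc : Fintype.card t = 2 * (dvc + 1) := by
    rw [Set.encard_eq_coe_toFinset_card] at ht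
    have h5 : t.toFinset.card = 2 * (dvc + 1) := by exact_mod_cast ht
    rwa [Set.toFinset_card] at h5
  obtain ⟨z, hzdef⟩ : ∃ z : Fin (2 * (dvc + 1)) → ↥X,
      ∀ i, z i = ((Fintype.equivFinOfCardEq htc).symm i : ↥X) := ⟨_, fun _ => rfl⟩
  have hzinj : Function.Injective z := by
    intro i j h
    rw [hzdef, hzdef] at h
    exact (Fintype.equivFinOfCardEq htc).symm.injective (Subtype.ext h)
  obtain ⟨Ap, Bp, hApinj, hBA, hkey⟩ := exists_bad_pairs
    {g : ↥X × ↥X → Prop | ∃ r ∈ R, g = fun p => r p.2 < r p.1} hVC z hzinj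
  have hkey' : ∀ r ∈ R, ∃ i, ¬ (r (Bp i) < r (Ap i)) := by
    intro r hr
    obtain ⟨i, hi⟩ := hkey (fun p => r p.2 < r p.1) ⟨r, hr, rfl⟩
    exact ⟨i, hi.elim id (fun h => lt_asymm h)⟩
  have hkkpos : (0 : ℝ) < ((dvc + 1 : ℕ) : ℝ) := by exact_mod_cast Nat.succ_pos dvc
  set P : Measure ↥X := ((dvc + 1 : ℕ) : ℝ≥0∞)⁻¹ • ∑ j, Measure.dirac (Ap j) with hP
  set DI0 : Measure (↥X × ℕ) := ((dvc + 1 : ℕ) : ℝ≥0∞)⁻¹ • ∑ j, Measure.dirac (Ap j, 1) with hDI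
  have hprobI : IsProbabilityMeasure DI0 := isProb_unif (Nat.succ_ne_zero dvc) _
  have hsuppI : DI0 {p : ↥X × ℕ | p.2 ∉ Set.Icc 1 K} = 0 := by
    rw [hDI, Measure.smul_apply, Measure.coe_finset_sum]
    simp only [Finset.sum_apply]
    have h0 : ∀ j : Fin (dvc + 1),
        Measure.dirac ((Ap j, 1) : ↥X × ℕ) {p : ↥X × ℕ | p.2 ∉ Set.Icc 1 K} = 0 := by
      intro j
      rw [Measure.dirac_apply]
      have hmem : ((Ap j, 1) : ↥X × ℕ) ∉ {p : ↥X × ℕ | p.2 ∉ Set.Icc 1 K} := by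
        simp only [Set.mem_setOf_eq, Set.mem_Icc, not_not]
        omega
      rw [Set.indicator_of_notMem hmem]
    simp only [h0, Finset.sum_const_zero, smul_zero]
  let Dom : Fin (dvc + 1) → Domain ↥X K := fun i =>
    { DI := DI0
      DO := Measure.dirac (Bp i, K + 1)
      prior := 0
      probI := hprobI
      probO := Measure.dirac.isProbabilityMeasure
      suppI := hsuppI
      suppO := by
        rw [Measure.dirac_apply]
        have hmem : ((Bp i, K + 1) : ↥X × ℕ) ∉ {p : ↥X × ℕ | p.2 ≠ K + 1} := by simp
        rw [Set.indicator_of_notMem hmem]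
      prior_mem := ⟨le_refl 0, one_pos⟩ }
  have hmargI : ∀ i, (Dom i).margI = P := by
    intro i
    show DI0.map Prod.fst = P
    rw [hDI, Measure.map_smul, map_fst_sum_dirac, hP]
  have hmargO : ∀ i, (Dom i).margO = Measure.dirac (Bp i) := by
    intro i
    show (Measure.dirac ((Bp i, K + 1) : ↥X × ℕ)).map Prod.fst = _
    rw [Measure.map_dirac' measurable_fst]
  have hsep : ∀ i, Dom i ∈ separateSpace ↥X K := by
    intro i
    show mSupport (Dom i).margO ∩ mSupport (Dom i).margI = ∅
    rw [hmargI i, hmargO i, Set.eq_empty_iff_forall_notMem]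
    rintro x ⟨hxO, hxI⟩
    have hxO' : x ∈ ({Bp i} : Set ↥X) := by
      refine mSupport_subset isClosed_singleton ?_ hxO
      rw [Measure.dirac_apply,
        Set.indicator_of_notMem (by simp : Bp i ∉ ({Bp i} : Set ↥X)ᶜ)]
    have hxI' : x ∈ Set.range Ap := by
      refine mSupport_subset (Set.finite_range Ap).isClosed ?_ hxI
      rw [hP, Measure.smul_apply, Measure.coe_finset_sum]
      simp only [Finset.sum_apply]
      have h0 : ∀ j : Fin (dvc + 1), Measure.dirac (Ap j) (Set.range Ap)ᶜ = 0 := by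
        intro j
        rw [Measure.dirac_apply]
        have hmem : Ap j ∉ (Set.range Ap)ᶜ := by simp
        rw [Set.indicator_of_notMem hmem]
      simp only [h0, Finset.sum_const_zero, smul_zero]
    obtain ⟨j, hj⟩ := hxI'
    rw [Set.mem_singleton_iff] at hxO'
    exact hBA i j (by rw [← hxO', hj])
  -- AUC bounds
  have hAUC01 : ∀ (r : ↥X → ℝ) (c : ↥X),
      0 ≤ AUC r P (Measure.dirac c) ∧ AUC r P (Measure.dirac c) ≤ 1 := by
    intro r c
    rw [hP, AUC_unif_dirac]
    constructor
    · apply mul_nonneg (by positivity)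
      exact Finset.sum_nonneg fun j _ => term_nonneg _ _
    · have hs : ∑ j : Fin (dvc + 1), ((if r c < r (Ap j) then (1 : ℝ) else 0)
          + 1 / 2 * (if r (Ap j) = r c then 1 else 0)) ≤ ((dvc + 1 : ℕ) : ℝ) := by
        calc ∑ j : Fin (dvc + 1), ((if r c < r (Ap j) then (1 : ℝ) else 0)
              + 1 / 2 * (if r (Ap j) = r c then 1 else 0))
            ≤ ∑ _j : Fin (dvc + 1), (1 : ℝ) := Finset.sum_le_sum fun j _ => term_le_one _ _
          _ = ((dvc + 1 : ℕ) : ℝ) := by simp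
      calc ((dvc + 1 : ℕ) : ℝ)⁻¹ * ∑ j : Fin (dvc + 1), ((if r c < r (Ap j) then (1 : ℝ) else 0)
            + 1 / 2 * (if r (Ap j) = r c then 1 else 0))
          ≤ ((dvc + 1 : ℕ) : ℝ)⁻¹ * ((dvc + 1 : ℕ) : ℝ) := by
            apply mul_le_mul_of_nonneg_left hs (by positivity)
        _ = 1 := inv_mul_cancel₀ (ne_of_gt hkkpos)
  have hsup : ∀ i : Fin (dvc + 1), (⨆ r : R, AUC r.1 P (Measure.dirac (Bp i))) = 1 := by
    intro i
    obtain ⟨r0, hr0R, hr0⟩ := hsepR (Bp i)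
    haveI : Nonempty ↥R := ⟨⟨r0, hr0R⟩⟩
    have hbdd : BddAbove (Set.range fun r : R => AUC r.1 P (Measure.dirac (Bp i))) := by
      refine ⟨1, ?_⟩
      rintro y ⟨r, rfl⟩
      exact (hAUC01 r.1 (Bp i)).2
    have h1 : AUC r0 P (Measure.dirac (Bp i)) = 1 := by
      rw [hP, AUC_unif_dirac]
      have hterm : ∀ j : Fin (dvc + 1), ((if r0 (Bp i) < r0 (Ap j) then (1 : ℝ) else 0)
          + 1 / 2 * (if r0 (Ap j) = r0 (Bp i) then 1 else 0)) = 1 := by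
        intro j
        have hlt : r0 (Bp i) < r0 (Ap j) := hr0 (Ap j) (fun h => hBA i j h.symm)
        rw [if_pos hlt, if_neg (ne_of_gt hlt)]
        norm_num
      rw [Finset.sum_congr rfl fun j _ => hterm j]
      simp only [Finset.sum_const, Finset.card_univ, Fintype.card_fin, nsmul_eq_mul, mul_one]
      exact inv_mul_cancel₀ (ne_of_gt hkkpos)
    apply le_antisymm
    · exact ciSup_le fun r => (hAUC01 r.1 (Bp i)).2
    · calc (1 : ℝ) = AUC r0 P (Measure.dirac (Bp i)) := h1.symm
        _ ≤ ⨆ r : R, AUC r.1 P (Measure.dirac (Bp i)) := le_ciSup hbdd ⟨r0, hr0R⟩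
  -- choose a sample size with small error
  have hδpos : (0 : ℝ) < 1 / (2 * ((dvc + 1 : ℕ) : ℝ) ^ 2) := by positivity
  obtain ⟨n, hn1, hnε⟩ :=
    ((eventually_ge_atTop 1).and (hε0.eventually_lt_const hδpos)).exists
  have hDIeq : ∀ i : Fin (dvc + 1), (Dom i).DI = DI0 := fun i => rfl
  set μS : Measure (Fin n → ↥X × ℕ) := Measure.pi (fun _ : Fin n => DI0) with hμS
  haveI hμSP : IsProbabilityMeasure μS := by
    rw [hμS]
    haveI := hprobI
    infer_instance
  have hsm : ∀ i : Fin (dvc + 1), sampleMeasure (Dom i) n = μS := by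
    intro i
    rw [sampleMeasure_eq, hμS]
  have hint : ∀ i : Fin (dvc + 1),
      ∫ S, (1 - AUC (A n S) P (Measure.dirac (Bp i))) ∂μS ≤ ε n := by
    intro i
    have h := hAbound (Dom i) (hsep i) n hn1
    rw [hmargI i, hmargO i, hsup i, hsm i] at h
    exact h
  have hmeas : ∀ i : Fin (dvc + 1),
      Measurable fun S : Fin n → ↥X × ℕ => AUC (A n S) P (Measure.dirac (Bp i)) := by
    intro i
    have h := hAmeas (Dom i) (hsep i) n hn1
    rwa [hmargI i, hmargO i] at h
  have hFint : ∀ i : Fin (dvc + 1),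
      Integrable (fun S => 1 - AUC (A n S) P (Measure.dirac (Bp i))) μS := by
    intro i
    refine Integrable.mono' (integrable_const 1)
      ((measurable_const.sub (hmeas i)).aestronglyMeasurable) (ae_of_all _ fun S => ?_)
    have h01 := hAUC01 (A n S) (Bp i)
    rw [Real.norm_eq_abs, abs_le]
    constructor <;> linarith [h01.1, h01.2]
  have hptw : ∀ S : Fin n → ↥X × ℕ,
      1 / (2 * ((dvc + 1 : ℕ) : ℝ)) ≤ ∑ i : Fin (dvc + 1), (1 - AUC (A n S) P (Measure.dirac (Bp i))) := by
    intro S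
    obtain ⟨i0, hi0⟩ := hkey' (A n S) (hAmem n hn1 S)
    have hone : ∀ i : Fin (dvc + 1), 0 ≤ 1 - AUC (A n S) P (Measure.dirac (Bp i)) := fun i => by
      linarith [(hAUC01 (A n S) (Bp i)).2]
    have hi0b : 1 / (2 * ((dvc + 1 : ℕ) : ℝ)) ≤ 1 - AUC (A n S) P (Measure.dirac (Bp i0)) := by
      rw [hP, AUC_unif_dirac]
      have hsumle : ∑ j : Fin (dvc + 1), ((if A n S (Bp i0) < A n S (Ap j) then (1 : ℝ) else 0)
          + 1 / 2 * (if A n S (Ap j) = A n S (Bp i0) then 1 else 0)) ≤ ((dvc + 1 : ℕ) : ℝ) - 1 / 2 := by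
        have h1 : ((if A n S (Bp i0) < A n S (Ap i0) then (1 : ℝ) else 0)
            + 1 / 2 * (if A n S (Ap i0) = A n S (Bp i0) then 1 else 0)) ≤ 1 / 2 := by
          rw [if_neg hi0]
          split_ifs <;> norm_num
        have h2 : ∑ j ∈ Finset.univ.erase i0,
            ((if A n S (Bp i0) < A n S (Ap j) then (1 : ℝ) else 0)
              + 1 / 2 * (if A n S (Ap j) = A n S (Bp i0) then 1 else 0))
            ≤ (((dvc + 1 : ℕ) : ℝ) - 1) := by
          calc ∑ j ∈ Finset.univ.erase i0,
              ((if A n S (Bp i0) < A n S (Ap j) then (1 : ℝ) else 0)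
                + 1 / 2 * (if A n S (Ap j) = A n S (Bp i0) then 1 else 0))
              ≤ ∑ _j ∈ Finset.univ.erase i0, (1 : ℝ) :=
                Finset.sum_le_sum fun j _ => term_le_one _ _
            _ = (((dvc + 1 : ℕ) : ℝ) - 1) := by
                rw [Finset.sum_const]
                rw [Finset.card_erase_of_mem (Finset.mem_univ _)]
                simp only [Finset.card_univ, Fintype.card_fin, nsmul_eq_mul, mul_one,
                  Nat.add_sub_cancel]
                push_cast
                ring
        calc ∑ j : Fin (dvc + 1), ((if A n S (Bp i0) < A n S (Ap j) then (1 : ℝ) else 0)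
              + 1 / 2 * (if A n S (Ap j) = A n S (Bp i0) then 1 else 0))
            = ((if A n S (Bp i0) < A n S (Ap i0) then (1 : ℝ) else 0)
              + 1 / 2 * (if A n S (Ap i0) = A n S (Bp i0) then 1 else 0))
              + ∑ j ∈ Finset.univ.erase i0,
                ((if A n S (Bp i0) < A n S (Ap j) then (1 : ℝ) else 0)
                  + 1 / 2 * (if A n S (Ap j) = A n S (Bp i0) then 1 else 0)) :=
              (Finset.add_sum_erase _ _ (Finset.mem_univ _)).symm
          _ ≤ 1 / 2 + (((dvc + 1 : ℕ) : ℝ) - 1) := add_le_add h1 h2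
          _ = ((dvc + 1 : ℕ) : ℝ) - 1 / 2 := by ring
      have hmul : ((dvc + 1 : ℕ) : ℝ)⁻¹ * ∑ j : Fin (dvc + 1),
          ((if A n S (Bp i0) < A n S (Ap j) then (1 : ℝ) else 0)
            + 1 / 2 * (if A n S (Ap j) = A n S (Bp i0) then 1 else 0))
          ≤ ((dvc + 1 : ℕ) : ℝ)⁻¹ * (((dvc + 1 : ℕ) : ℝ) - 1 / 2) :=
        mul_le_mul_of_nonneg_left hsumle (by positivity)
      have hq : ((dvc + 1 : ℕ) : ℝ)⁻¹ * (((dvc + 1 : ℕ) : ℝ) - 1 / 2) = 1 - 1 / (2 * ((dvc + 1 : ℕ) : ℝ)) := by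
        field_simp
      rw [hq] at hmul
      linarith
    calc 1 / (2 * ((dvc + 1 : ℕ) : ℝ)) ≤ 1 - AUC (A n S) P (Measure.dirac (Bp i0)) := hi0b
      _ ≤ ∑ i : Fin (dvc + 1), (1 - AUC (A n S) P (Measure.dirac (Bp i))) :=
        Finset.single_le_sum (fun i _ => hone i) (Finset.mem_univ i0)
  have hlow : 1 / (2 * ((dvc + 1 : ℕ) : ℝ))
      ≤ ∑ i : Fin (dvc + 1), ∫ S, (1 - AUC (A n S) P (Measure.dirac (Bp i))) ∂μS := by
    rw [← integral_finset_sum Finset.univ fun i _ => hFint i]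
    have := integral_mono (μ := μS) (integrable_const (1 / (2 * ((dvc + 1 : ℕ) : ℝ))))
      (integrable_finset_sum Finset.univ fun i _ => hFint i) hptw
    rwa [integral_const, probReal_univ, one_smul] at this
  have hup : ∑ i : Fin (dvc + 1), ∫ S, (1 - AUC (A n S) P (Measure.dirac (Bp i))) ∂μS
      ≤ ((dvc + 1 : ℕ) : ℝ) * ε n := by
    calc ∑ i : Fin (dvc + 1), ∫ S, (1 - AUC (A n S) P (Measure.dirac (Bp i))) ∂μS
        ≤ ∑ _i : Fin (dvc + 1), ε n := Finset.sum_le_sum fun i _ => hint i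
      _ = ((dvc + 1 : ℕ) : ℝ) * ε n := by
        rw [Finset.sum_const]
        simp [mul_comm]
  have hfin : ((dvc + 1 : ℕ) : ℝ) * ε n < ((dvc + 1 : ℕ) : ℝ) * (1 / (2 * ((dvc + 1 : ℕ) : ℝ) ^ 2)) :=
    mul_lt_mul_of_pos_left hnε hkkpos
  have heq : ((dvc + 1 : ℕ) : ℝ) * (1 / (2 * ((dvc + 1 : ℕ) : ℝ) ^ 2)) = 1 / (2 * ((dvc + 1 : ℕ) : ℝ)) := by
    field_simp
  rw [heq] at hfin
  linarith


end OODF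

end
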